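/- arXiv:2503.05941 — 2 statements merged into one kernel-verified Lean document; each statement's English description precedes it below -/
import Mathlib

section
/- (Finite termination of the conjugate directions method, Theorem 1.) Let Ā be a symmetric positive definite n×n real matrix, b ∈ ℝⁿ, and let p_0, p_1, …, p_{n−1} ∈ ℝⁿ be nonzero vectors conjugate with respect to Ā. Starting from an arbitrary x_0 ∈ ℝⁿ, define iterates by x_{k+1} = x_k + α_k p_k where α_k = −(Ā x_k − b)ᵀ p_k / (p_kᵀ Ā p_k). Then x_n = Ā⁻¹ b; that is, the sequence reaches the unique solution x* of Ā x = b in at most n steps. -/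
open Matrix

/-- Finite termination of the conjugate directions method:
with step sizes `α_k = −(Ā x_k − b)ᵀ p_k / (p_kᵀ Ā p_k)` along nonzero conjugate
directions `p_0, …, p_{n−1}`, from any `x_0` we have `x_n = Ā⁻¹ b`. -/
theorem stmt7 {n : ℕ} (Abar : Matrix (Fin n) (Fin n) ℝ) (hA : Abar.PosDef)
    (b : Fin n → ℝ) (p : ℕ → (Fin n → ℝ)) (hp : ∀ k < n, p k ≠ 0)
    (hconj : ∀ i < n, ∀ j < n, i ≠ j → p i ⬝ᵥ Abar.mulVec (p j) = 0)
    (x : ℕ → (Fin n → ℝ))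
    (hx : ∀ k < n, x (k + 1) = x k +
      (-(((Abar.mulVec (x k) - b) ⬝ᵥ p k) / (p k ⬝ᵥ Abar.mulVec (p k)))) • p k) :
    x n = Abar⁻¹.mulVec b := by
  classical
  have hdet : IsUnit Abar.det := isUnit_iff_ne_zero.mpr (ne_of_gt hA.det_pos)
  have hsolve : Abar.mulVec (Abar⁻¹.mulVec b) = b := by
    rw [Matrix.mulVec_mulVec, Matrix.mul_nonsing_inv _ hdet, Matrix.one_mulVec]
  have hpos : ∀ k < n, 0 < p k ⬝ᵥ Abar.mulVec (p k) := by
    intro k hk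
    have := hA.dotProduct_mulVec_pos (hp k hk)
    simpa using this
  set α : ℕ → ℝ := fun k =>
    -(((Abar.mulVec (x k) - b) ⬝ᵥ p k) / (p k ⬝ᵥ Abar.mulVec (p k))) with hα
  -- dot product with A-mulVec of a sum
  have hlin : ∀ {ι : Type} (s : Finset ι) (f : ι → Fin n → ℝ) (j : ℕ),
      p j ⬝ᵥ Abar.mulVec (∑ i ∈ s, f i) = ∑ i ∈ s, p j ⬝ᵥ Abar.mulVec (f i) := by
    intro ι s f j
    induction s using Finset.induction with
    | empty => simp
    | insert _ _ hns ih => simp [Finset.sum_insert hns, Matrix.mulVec_add, dotProduct_add, ih]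
  have hxsum : ∀ k, k ≤ n → x k = x 0 + ∑ i ∈ Finset.range k, α i • p i := by
    intro k
    induction k with
    | zero => simp
    | succ m ih =>
      intro hm
      rw [Finset.sum_range_succ, ← add_assoc, ← ih (by omega), hx m (by omega)]
  -- residual identity at step j
  have hdotj : ∀ j < n, p j ⬝ᵥ Abar.mulVec (x j) = p j ⬝ᵥ Abar.mulVec (x 0) := by
    intro j hj
    rw [hxsum j (by omega), Matrix.mulVec_add, dotProduct_add, hlin]
    have : ∑ i ∈ Finset.range j, p j ⬝ᵥ Abar.mulVec (α i • p i) = 0 := by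
      apply Finset.sum_eq_zero
      intro i hi
      have hij : i < j := Finset.mem_range.mp hi
      rw [Matrix.mulVec_smul, dotProduct_smul, hconj j hj i (by omega) (by omega), smul_zero]
    rw [this, add_zero]
  -- main dot product identity for x n
  have hkey : ∀ j < n, p j ⬝ᵥ Abar.mulVec (x n) = p j ⬝ᵥ b := by
    intro j hj
    rw [hxsum n le_rfl, Matrix.mulVec_add, dotProduct_add, hlin]
    have hsum : ∑ i ∈ Finset.range n, p j ⬝ᵥ Abar.mulVec (α i • p i)
        = α j * (p j ⬝ᵥ Abar.mulVec (p j)) := by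
      rw [Finset.sum_eq_single j]
      · rw [Matrix.mulVec_smul, dotProduct_smul]; rfl
      · intro i hi hij
        rw [Matrix.mulVec_smul, dotProduct_smul,
          hconj j hj i (Finset.mem_range.mp hi) (Ne.symm hij), smul_zero]
      · intro h; exact absurd (Finset.mem_range.mpr hj) h
    rw [hsum, hα]
    have hne : p j ⬝ᵥ Abar.mulVec (p j) ≠ 0 := ne_of_gt (hpos j hj)
    have hres : (Abar.mulVec (x j) - b) ⬝ᵥ p j
        = p j ⬝ᵥ Abar.mulVec (x 0) - p j ⬝ᵥ b := by
      rw [sub_dotProduct, dotProduct_comm, hdotj j hj, dotProduct_comm b]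
    field_simp [hres]
    rw [hres]; ring
  -- the error vector
  set e : Fin n → ℝ := x n - Abar⁻¹.mulVec b with he
  have horth : ∀ j < n, p j ⬝ᵥ Abar.mulVec e = 0 := by
    intro j hj
    rw [he, Matrix.mulVec_sub, dotProduct_sub, hsolve, hkey j hj, sub_self]
  -- linear independence and basis
  set P : Fin n → (Fin n → ℝ) := fun i => p i with hP
  have hli : LinearIndependent ℝ P := by
    rw [Fintype.linearIndependent_iff]
    intro g hg j
    have h0 : p (j : ℕ) ⬝ᵥ Abar.mulVec (∑ i, g i • P i) = 0 := by
      rw [hg, Matrix.mulVec_zero, dotProduct_zero]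
    rw [hlin] at h0
    have hsum : ∑ i, p (j : ℕ) ⬝ᵥ Abar.mulVec (g i • P i)
        = g j * (p (j : ℕ) ⬝ᵥ Abar.mulVec (p (j : ℕ))) := by
      rw [Finset.sum_eq_single j]
      · rw [Matrix.mulVec_smul, dotProduct_smul]; rfl
      · intro i _ hij
        rw [Matrix.mulVec_smul, dotProduct_smul,
          hconj (j : ℕ) j.isLt (i : ℕ) i.isLt (by simpa [Fin.val_eq_val] using (Ne.symm hij)),
          smul_zero]
      · intro h; exact absurd (Finset.mem_univ j) h
    rw [hsum] at h0
    exact (mul_eq_zero.mp h0).resolve_right (ne_of_gt (hpos _ j.isLt))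
  rcases Nat.eq_zero_or_pos n with hn | hn
  · subst hn; exact Subsingleton.elim _ _
  haveI : Nonempty (Fin n) := ⟨⟨0, hn⟩⟩
  have hcard : Fintype.card (Fin n) = Module.finrank ℝ (Fin n → ℝ) := by simp
  let B : Module.Basis (Fin n) ℝ (Fin n → ℝ) := basisOfLinearIndependentOfCardEqFinrank hli hcard
  have hB : ∀ i, B i = P i := fun i => by
    simp [B, coe_basisOfLinearIndependentOfCardEqFinrank]
  have hrep : ∑ i, B.repr e i • P i = e := by
    conv_rhs => rw [← B.sum_repr e]
    exact Finset.sum_congr rfl fun i _ => by rw [hB]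
  have hlin2 : ∀ (f : Fin n → Fin n → ℝ) (w : Fin n → ℝ),
      (∑ i, f i) ⬝ᵥ w = ∑ i, f i ⬝ᵥ w := by
    intro f w
    induction (Finset.univ : Finset (Fin n)) using Finset.induction with
    | empty => simp
    | insert _ _ hns ih => simp [Finset.sum_insert hns, add_dotProduct, ih]
  have hee : e ⬝ᵥ Abar.mulVec e = 0 := by
    nth_rewrite 1 [← hrep]
    rw [hlin2]
    apply Finset.sum_eq_zero
    intro i _
    rw [smul_dotProduct, horth (i : ℕ) i.isLt, smul_zero]
  have he0 : e = 0 := by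
    by_contra h
    have hlt : (0:ℝ) < e ⬝ᵥ Abar.mulVec e := by simpa using hA.dotProduct_mulVec_pos h
    rw [hee] at hlt
    exact lt_irrefl _ hlt
  have := sub_eq_zero.mp he0
  exact this
end

section
/- (Correctness of the conjugate gradient direction update.) Let Ā be a symmetric positive definite n×n real matrix and b ∈ ℝⁿ. Consider the conjugate gradient iteration: r_0 = Ā x_0 − b, p_0 = −r_0, and for k ≥ 0 with r_k ≠ 0, α_k = (r_kᵀ r_k)/(p_kᵀ Ā p_k), x_{k+1} = x_k + α_k p_k, r_{k+1} = r_k + α_k Ā p_k, β_{k+1} = (r_{k+1}ᵀ r_{k+1})/(r_kᵀ r_k), p_{k+1} = −r_{k+1} + β_{k+1} p_k. Then for every k before termination: (i) r_iᵀ r_j = 0 for all i ≠ j with i, j ≤ k, and (ii) p_iᵀ Ā p_j = 0 for all i ≠ j with i, j ≤ k; i.e., the generated residuals are mutually orthogonal and the generated directions are conjugate with respect to Ā. -/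
open Matrix

/-- Correctness of the conjugate gradient direction update:
before termination, the CG residuals are mutually orthogonal and the CG
directions are conjugate with respect to `Ā`. -/
theorem stmt10 {n : ℕ} (Abar : Matrix (Fin n) (Fin n) ℝ) (hA : Abar.PosDef)
    (b : Fin n → ℝ) (x r p : ℕ → (Fin n → ℝ))
    (hr0 : r 0 = Abar.mulVec (x 0) - b) (hp0 : p 0 = -r 0)
    (hstep : ∀ k : ℕ, r k ≠ 0 →
      x (k + 1) = x k + ((r k ⬝ᵥ r k) / (p k ⬝ᵥ Abar.mulVec (p k))) • p k ∧
      r (k + 1) = r k + ((r k ⬝ᵥ r k) / (p k ⬝ᵥ Abar.mulVec (p k))) • Abar.mulVec (p k) ∧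
      p (k + 1) = -r (k + 1) + ((r (k + 1) ⬝ᵥ r (k + 1)) / (r k ⬝ᵥ r k)) • p k)
    (k : ℕ) (hterm : ∀ j ≤ k, r j ≠ 0) :
    (∀ i ≤ k, ∀ j ≤ k, i ≠ j → r i ⬝ᵥ r j = 0) ∧
    (∀ i ≤ k, ∀ j ≤ k, i ≠ j → p i ⬝ᵥ Abar.mulVec (p j) = 0) := by
  classical
  -- symmetry of the bilinear form
  have hAT : Abarᵀ = Abar := by
    have h := hA.1
    simpa [Matrix.IsHermitian] using h
  have hsym : ∀ u v : Fin n → ℝ, u ⬝ᵥ Abar *ᵥ v = v ⬝ᵥ Abar *ᵥ u := by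
    intro u v
    rw [dotProduct_mulVec,
      show u ᵥ* Abar = Abar *ᵥ u by conv_lhs => rw [← hAT, vecMul_transpose]]
    exact dotProduct_comm _ _
  -- positivity
  have hpos : ∀ v : Fin n → ℝ, v ≠ 0 → 0 < v ⬝ᵥ Abar *ᵥ v := by
    intro v hv
    simpa using hA.dotProduct_mulVec_pos hv
  -- main invariant by induction
  have aux : ∀ N : ℕ, (∀ j, j < N → r j ≠ 0) →
      (∀ i ≤ N, ∀ j ≤ N, i ≠ j → r i ⬝ᵥ r j = 0) ∧
      (∀ i ≤ N, ∀ j ≤ N, i ≠ j → p i ⬝ᵥ Abar *ᵥ p j = 0) ∧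
      (∀ i ≤ N, p i ⬝ᵥ r i = -(r i ⬝ᵥ r i)) := by
    intro N
    induction N with
    | zero =>
      intro _
      refine ⟨?_, ?_, ?_⟩
      · intro i hi j hj hij; omega
      · intro i hi j hj hij; omega
      · intro i hi
        interval_cases i
        rw [hp0, neg_dotProduct]
    | succ K ih =>
      intro hnz
      obtain ⟨horth, hconj, hpr⟩ := ih (fun j hj => hnz j (by omega))
      have hrk : r K ≠ 0 := hnz K (by omega)
      have hrr : ∀ j ≤ K, r j ⬝ᵥ r j ≠ 0 := by
        intro j hj
        simpa [dotProduct_self_eq_zero] using hnz j (by omega)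
      have hpap : ∀ j ≤ K, 0 < p j ⬝ᵥ Abar *ᵥ p j := by
        intro j hj
        refine hpos _ ?_
        intro h0
        exact hrr j hj (by simpa [h0, neg_eq_zero] using (hpr j hj).symm)
      have hα : ∀ j ≤ K, (r j ⬝ᵥ r j) / (p j ⬝ᵥ Abar *ᵥ p j) ≠ 0 :=
        fun j hj => div_ne_zero (hrr j hj) (ne_of_gt (hpap j hj))
      -- r j ⬝ A p K = 0 for j < K
      have hrAp : ∀ j ≤ K, j ≠ K → r j ⬝ᵥ Abar *ᵥ p K = 0 := by
        intro j hj hjK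
        rcases Nat.eq_zero_or_pos j with h0 | h0
        · subst h0
          rw [show r 0 = -p 0 by rw [hp0, neg_neg], neg_dotProduct,
            hconj 0 (by omega) K le_rfl hjK, neg_zero]
        · obtain ⟨m, rfl⟩ := Nat.exists_eq_add_of_lt h0
          simp only [Nat.zero_add] at *
          have hs := (hstep m (hnz m (by omega))).2.2
          have hre : r (m+1) = -p (m+1) + ((r (m+1) ⬝ᵥ r (m+1)) / (r m ⬝ᵥ r m)) • p m := by
            rw [hs]; abel
          rw [hre, add_dotProduct, neg_dotProduct, smul_dotProduct, smul_eq_mul,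
            hconj (m+1) hj K le_rfl hjK, hconj m (by omega) K le_rfl (by omega)]
          ring
      -- r K ⬝ A p K = -(p K ⬝ A p K)
      have hrApK : r K ⬝ᵥ Abar *ᵥ p K = -(p K ⬝ᵥ Abar *ᵥ p K) := by
        rcases Nat.eq_zero_or_pos K with h0 | h0
        · rw [h0]
          conv_lhs => rw [show r 0 = -p 0 by rw [hp0, neg_neg]]
          rw [neg_dotProduct]
        · obtain ⟨m, rfl⟩ := Nat.exists_eq_add_of_lt h0
          simp only [Nat.zero_add] at *
          have hs := (hstep m (hnz m (by omega))).2.2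
          have hre : r (m+1) = -p (m+1) + ((r (m+1) ⬝ᵥ r (m+1)) / (r m ⬝ᵥ r m)) • p m := by
            rw [hs]; abel
          rw [hre, add_dotProduct, neg_dotProduct, smul_dotProduct, smul_eq_mul,
            hconj m (by omega) (m+1) le_rfl (by omega)]
          ring
      -- new residual orthogonal to all old residuals
      have hnew_r : ∀ j ≤ K, r (K+1) ⬝ᵥ r j = 0 := by
        intro j hj
        have hs := (hstep K hrk).2.1
        rw [hs, add_dotProduct, smul_dotProduct, smul_eq_mul,
          dotProduct_comm (Abar *ᵥ p K) (r j)]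
        rcases eq_or_ne j K with h | hjK
        · rw [h, hrApK]
          have hd := ne_of_gt (hpap K le_rfl)
          field_simp
          ring
        · rw [hrAp j hj hjK, dotProduct_comm, horth j hj K le_rfl hjK]
          ring
      -- p K ⬝ r (K+1) = 0
      have hpk_rk1 : p K ⬝ᵥ r (K+1) = 0 := by
        have hs := (hstep K hrk).2.1
        rw [hs, dotProduct_add, dotProduct_smul, smul_eq_mul, hpr K le_rfl]
        have hd : p K ⬝ᵥ Abar *ᵥ p K ≠ 0 := ne_of_gt (hpap K le_rfl)
        field_simp
        ring
      -- expansion identity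
      have hgen : ∀ i ≤ K, r (K+1) ⬝ᵥ r (i+1) = r (K+1) ⬝ᵥ r i +
          ((r i ⬝ᵥ r i) / (p i ⬝ᵥ Abar *ᵥ p i)) * (r (K+1) ⬝ᵥ Abar *ᵥ p i) := by
        intro i hi
        have hs1 := (hstep i (hnz i (by omega))).2.1
        rw [hs1, dotProduct_add, dotProduct_smul, smul_eq_mul]
      -- new direction conjugate to all old directions
      have hnew_p : ∀ j ≤ K, p (K+1) ⬝ᵥ Abar *ᵥ p j = 0 := by
        intro j hj
        have hs := (hstep K hrk).2.2
        rw [hs, add_dotProduct, neg_dotProduct, smul_dotProduct, smul_eq_mul]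
        rcases eq_or_ne j K with h | hjK
        · rw [h]
          have key := hgen K le_rfl
          rw [hnew_r K le_rfl, zero_add] at key
          rw [key]
          have hd := ne_of_gt (hpap K le_rfl)
          have hr := hrr K le_rfl
          field_simp
          ring
        · rw [hconj K le_rfl j hj (fun h' => hjK h'.symm), mul_zero, add_zero]
          have key := hgen j hj
          rw [hnew_r j hj, zero_add, hnew_r (j+1) (by omega)] at key
          rcases mul_eq_zero.mp key.symm with h | h
          · exact absurd h (hα j hj)
          · rw [h, neg_zero]
      have hnew_pr : p (K+1) ⬝ᵥ r (K+1) = -(r (K+1) ⬝ᵥ r (K+1)) := by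
        have hs := (hstep K hrk).2.2
        rw [hs, add_dotProduct, neg_dotProduct, smul_dotProduct, smul_eq_mul,
          hpk_rk1, mul_zero, add_zero]
      have hle : ∀ i : ℕ, i ≤ K + 1 → i ≤ K ∨ i = K + 1 := by intro i hi; omega
      refine ⟨?_, ?_, ?_⟩
      · intro i hi j hj hij
        rcases hle i hi with hi' | rfl
        · rcases hle j hj with hj' | rfl
          · exact horth i hi' j hj' hij
          · rw [dotProduct_comm]; exact hnew_r i hi'
        · rcases hle j hj with hj' | rfl
          · exact hnew_r j hj'
          · exact absurd rfl hij
      · intro i hi j hj hij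
        rcases hle i hi with hi' | rfl
        · rcases hle j hj with hj' | rfl
          · exact hconj i hi' j hj' hij
          · rw [hsym]; exact hnew_p i hi'
        · rcases hle j hj with hj' | rfl
          · exact hnew_p j hj'
          · exact absurd rfl hij
      · intro i hi
        rcases hle i hi with hi' | rfl
        · exact hpr i hi'
        · exact hnew_pr
  obtain ⟨h1, h2, _⟩ := aux k (fun j hj => hterm j (le_of_lt hj))
  exact ⟨h1, h2⟩
end
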